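/- Let d ∈ ℕ, p ∈ (0,∞), and α > 0. If γ*(ℓ,c) > α/(d/p) = αp/d, then the embedding A^α_{ℓ,c,p}([0,1]^d) ↪ C([0,1]^d) does not hold; more precisely, there exists a sequence of continuous functions f_k : [0,1]^d → ℝ with ‖f_k‖_{A^α_{ℓ,c,p}([0,1]^d)} ≤ 1 for all k while ‖f_k‖_{L^∞([0,1]^d)} → ∞ as k → ∞. -/

import Mathlib

open MeasureTheory Filter
open scoped ENNReal NNReal Classical

noncomputable section

/-- The ReLU activation function. -/
def relu (x : ℝ) : ℝ := max 0 x

/-- A (ReLU) neural network with input dimension `d` and output dimension `1` is encoded by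
its number of layers `L ≥ 1`, its widths `N` (with `N 0 = d` and `N L = 1`),
its matrices `A ℓ` and bias vectors `b ℓ` (only the values for `ℓ < L` are relevant). -/
structure NeuralNet (d : ℕ) where
  L : ℕ
  hL : 0 < L
  N : ℕ → ℕ
  hN0 : N 0 = d
  hNL : N L = 1
  A : ∀ ℓ : ℕ, Matrix (Fin (N (ℓ + 1))) (Fin (N ℓ)) ℝ
  b : ∀ ℓ : ℕ, Fin (N (ℓ + 1)) → ℝ

namespace NeuralNet

variable {d : ℕ}

/-- The vector of values computed in the `k`-th layer, with ReLU applied after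
each affine map. -/
def hidden (Φ : NeuralNet d) : (k : ℕ) → (Fin d → ℝ) → Fin (Φ.N k) → ℝ
  | 0, x => x ∘ Fin.cast Φ.hN0
  | k + 1, x => fun i => relu ((Φ.A k).mulVec (Φ.hidden k x) i + Φ.b k i)

/-- The realization `R_ρ Φ` of the network: the last affine map is applied
without the ReLU activation. -/
def realization (Φ : NeuralNet d) (x : Fin d → ℝ) : ℝ :=
  ((Φ.A (Φ.L - 1)).mulVec (Φ.hidden (Φ.L - 1) x) + Φ.b (Φ.L - 1))
    (Fin.cast (show (1 : ℕ) = Φ.N (Φ.L - 1 + 1) by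
      rw [Nat.sub_add_cancel Φ.hL, Φ.hNL]) 0)

/-- `W(Φ)`: the number of nonzero weights (entries of the matrices and bias vectors). -/
def weightCount (Φ : NeuralNet d) : ℕ :=
  ∑ ℓ ∈ Finset.range Φ.L,
    ((Finset.univ.filter fun ij : Fin (Φ.N (ℓ + 1)) × Fin (Φ.N ℓ) => Φ.A ℓ ij.1 ij.2 ≠ 0).card
      + (Finset.univ.filter fun i : Fin (Φ.N (ℓ + 1)) => Φ.b ℓ i ≠ 0).card)

/-- `‖Φ‖_NN ≤ C`: all entries of all matrices and bias vectors are bounded by `C` in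
absolute value. -/
def weightsBoundedBy (Φ : NeuralNet d) (C : ℝ≥0∞) : Prop :=
  ∀ ℓ < Φ.L, (∀ i j, ENNReal.ofReal |Φ.A ℓ i j| ≤ C) ∧ (∀ i, ENNReal.ofReal |Φ.b ℓ i| ≤ C)

end NeuralNet

/-- `Σ_n`: the set of realizations of networks with input dimension `d`, output dimension 1,
at most `n` nonzero weights, at most `ℓf n` layers, and weights bounded by `cf n`. -/
def NNSet (d : ℕ) (ℓf : ℕ → ℕ∞) (cf : ℕ → ℝ≥0∞) (n : ℕ) : Set ((Fin d → ℝ) → ℝ) :=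
  { F | ∃ Φ : NeuralNet d, F = Φ.realization ∧ Φ.weightCount ≤ n ∧
      (Φ.L : ℕ∞) ≤ ℓf n ∧ Φ.weightsBoundedBy (cf n) }

/-- The unit cube `[0,1]^d`. -/
def unitCube (d : ℕ) : Set (Fin d → ℝ) := Set.Icc 0 1

/-- `d_p(f, S)`: the `L^p(Ω)` distance of `f` to the set `S`. -/
def dLp (d : ℕ) (Ω : Set (Fin d → ℝ)) (p : ℝ≥0∞) (f : (Fin d → ℝ) → ℝ)
    (S : Set ((Fin d → ℝ) → ℝ)) : ℝ≥0∞ :=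
  ⨅ g ∈ S, eLpNorm (f - g) p (volume.restrict Ω)

/-- `Γ(f) = max (‖f‖_{L^p(Ω)}) (sup_{n ≥ 1} n^α d_p(f, Σ_n))`. -/
def Gamma (d : ℕ) (ℓf : ℕ → ℕ∞) (cf : ℕ → ℝ≥0∞) (Ω : Set (Fin d → ℝ)) (p : ℝ≥0∞) (α : ℝ)
    (f : (Fin d → ℝ) → ℝ) : ℝ≥0∞ :=
  max (eLpNorm f p (volume.restrict Ω))
    (⨆ n : ℕ, ((n + 1 : ℕ) : ℝ≥0∞) ^ α * dLp d Ω p f (NNSet d ℓf cf (n + 1)))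

/-- The approximation space quasi-norm `‖f‖_{A^α_{ℓ,c,p}(Ω)} = inf {θ > 0 : Γ(f/θ) ≤ 1}`,
with value `∞` (`sInf ∅`) if no such `θ` exists. -/
def ANorm (d : ℕ) (ℓf : ℕ → ℕ∞) (cf : ℕ → ℝ≥0∞) (Ω : Set (Fin d → ℝ)) (p : ℝ≥0∞) (α : ℝ)
    (f : (Fin d → ℝ) → ℝ) : ℝ≥0∞ :=
  sInf {t : ℝ≥0∞ | ∃ θ : ℝ, 0 < θ ∧ t = ENNReal.ofReal θ ∧
    Gamma d ℓf cf Ω p α (fun x => f x / θ) ≤ 1}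

/-- Membership in the approximation space `A^α_{ℓ,c,p}(Ω)`:
`f ∈ L^p(Ω)` and `‖f‖_{A^α_{ℓ,c,p}} < ∞`. -/
def MemA (d : ℕ) (ℓf : ℕ → ℕ∞) (cf : ℕ → ℝ≥0∞) (Ω : Set (Fin d → ℝ)) (p : ℝ≥0∞) (α : ℝ)
    (f : (Fin d → ℝ) → ℝ) : Prop :=
  MemLp f p (volume.restrict Ω) ∧ ANorm d ℓf cf Ω p α f < ⊤

/-- `ℓ* = sup_n ℓ(n)`. -/
def lstar (ℓf : ℕ → ℕ∞) : ℕ∞ := ⨆ n : ℕ, ℓf n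

/-- `γ*(ℓ,c)`. -/
def gammaStar (ℓf : ℕ → ℕ∞) (cf : ℕ → ℝ≥0∞) : ℝ≥0∞ :=
  sSup {t : ℝ≥0∞ | ∃ γ : ℝ, 0 ≤ γ ∧ t = ENNReal.ofReal γ ∧
    ∃ L : ℕ, 1 ≤ L ∧ (L : ℕ∞) ≤ lstar ℓf ∧
      0 < Filter.limsup
        (fun n : ℕ => cf n ^ L * (n : ℝ≥0∞) ^ (L / 2) / (n : ℝ≥0∞) ^ (γ : ℝ))
        Filter.atTop}

/-- `γ◇(ℓ,c)`. -/
def gammaDiamond (ℓf : ℕ → ℕ∞) (cf : ℕ → ℝ≥0∞) : ℝ≥0∞ :=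
  sInf {t : ℝ≥0∞ | ∃ γ : ℝ, 0 ≤ γ ∧ t = ENNReal.ofReal γ ∧
    ∃ C : ℝ, 0 < C ∧ ∀ n : ℕ, 1 ≤ n → ∀ L : ℕ, 1 ≤ L → (L : ℕ∞) ≤ lstar ℓf →
      cf n ^ L * (n : ℝ≥0∞) ^ (L / 2) ≤ ENNReal.ofReal C * (n : ℝ≥0∞) ^ (γ : ℝ)}

/-- The Hölder seminorm `Lip_β(f)` on the unit cube, with respect to the `ℓ∞` metric
(which is the metric of `Fin d → ℝ`), valued in `[0,∞]`. -/
def eLip (d : ℕ) (β : ℝ) (f : (Fin d → ℝ) → ℝ) : ℝ≥0∞ :=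
  ⨆ x ∈ unitCube d, ⨆ y ∈ unitCube d, ⨆ _ : x ≠ y,
    ENNReal.ofReal (|f x - f y| / dist x y ^ β)

/-- The supremum norm over the unit cube, valued in `[0,∞]`. -/
def supNormCube (d : ℕ) (f : (Fin d → ℝ) → ℝ) : ℝ≥0∞ :=
  ⨆ x ∈ unitCube d, ENNReal.ofReal |f x|

/-- The Hölder norm `‖f‖_{C^{0,β}} = ‖f‖_{L∞} + Lip_β(f)`, valued in `[0,∞]`. -/
def holderNorm (d : ℕ) (β : ℝ) (f : (Fin d → ℝ) → ℝ) : ℝ≥0∞ :=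
  supNormCube d f + eLip d β f

/-- `d/p`, interpreted as `0` when `p = ∞`. -/
def dOverP (d : ℕ) (p : ℝ≥0∞) : ℝ := if p = ⊤ then 0 else (d : ℝ) / p.toReal

/-- The function `ζ_{M'}(x) = max {0, 1 - M' * ∑ i, x i}`. -/
def zeta (d : ℕ) (M' : ℝ) (x : Fin d → ℝ) : ℝ := max 0 (1 - M' * ∑ i, x i)

/-- Piecewise constant interpolation of `f` on the tensor grid `{0, 1/n, …, n/n}^d`,
constant on the cells `(i_1/n, …, i_d/n) + [0, 1/n)^d`. -/
def pwConstGrid (d n : ℕ) (f : (Fin d → ℝ) → ℝ) (x : Fin d → ℝ) : ℝ :=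
  ∑ i : Fin d → Fin (n + 1),
    if ∀ j, ((i j : ℝ) / n ≤ x j ∧ x j < (i j : ℝ) / n + 1 / n) then
      f (fun j => (i j : ℝ) / n) else 0

/-- The piecewise constant interpolation operator `A_m^{pw-const}`,
using the grid with `n = ⌊m^{1/d}⌋ - 1`. -/
def pwConst (d m : ℕ) (f : (Fin d → ℝ) → ℝ) : (Fin d → ℝ) → ℝ :=
  pwConstGrid d (Nat.floor ((m : ℝ) ^ ((d : ℝ)⁻¹)) - 1) f

end

noncomputable section Aux

open Finset

/-- The zero network. -/
def zeroNet (d : ℕ) : NeuralNet d where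
  L := 1
  hL := one_pos
  N := fun ℓ => if ℓ = 0 then d else 1
  hN0 := by simp
  hNL := by simp
  A := fun _ => 0
  b := fun _ => 0

lemma zeroNet_realization (d : ℕ) : (zeroNet d).realization = fun _ => 0 := by
  funext x
  show ((0 : Matrix (Fin ((zeroNet d).N ((zeroNet d).L - 1 + 1))) (Fin ((zeroNet d).N ((zeroNet d).L - 1))) ℝ).mulVec _ + (0 : Fin ((zeroNet d).N ((zeroNet d).L - 1 + 1)) → ℝ)) _ = 0
  rw [Matrix.zero_mulVec]; simp

lemma zeroNet_mem (d n : ℕ) (ℓf : ℕ → ℕ∞) (cf : ℕ → ℝ≥0∞) (hℓ : 2 ≤ ℓf n) :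
    (fun _ : Fin d → ℝ => (0:ℝ)) ∈ NNSet d ℓf cf n := by
  refine ⟨zeroNet d, (zeroNet_realization d).symm, ?_, ?_, ?_⟩
  · simp [NeuralNet.weightCount, zeroNet]
  · have h1 : ((zeroNet d).L : ℕ∞) = 1 := by simp [zeroNet]
    rw [h1]; exact le_trans one_le_two hℓ
  · intro ℓ _
    constructor <;> intro <;> simp [zeroNet]
    · intro j; show ENNReal.ofReal |(0:ℝ)| ≤ cf n; simp
    · show ENNReal.ofReal |(0:ℝ)| ≤ cf n; simp

variable (d L m : ℕ) (c bb w : ℝ)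

/-- widths of the spike network -/
def sN (ℓ : ℕ) : ℕ := if ℓ = 0 then d else if ℓ < L ∧ Odd ℓ then m else 1

/-- The spike network. -/
def spikeNet (hL : 0 < L) : NeuralNet d where
  L := L
  hL := hL
  N := sN d L m
  hN0 := by simp [sN]
  hNL := by simp [sN, hL.ne', lt_irrefl]
  A := fun ℓ => fun _ _ => if ℓ = 0 then -c else w
  b := fun ℓ => fun _ => if ℓ = 0 then bb else 0

end Aux
lemma relu_nonneg (x : ℝ) : 0 ≤ relu x := le_max_left _ _

lemma relu_of_nonneg {x : ℝ} (h : 0 ≤ x) : relu x = x := max_eq_right h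

section SpikeFacts

variable {d L m : ℕ} {c bb w : ℝ}

lemma spikeNet_hidden (hL : 0 < L) (hw : 0 ≤ w) (x : Fin d → ℝ) :
    ∀ ℓ : ℕ, ∀ i : Fin ((spikeNet d L m c bb w hL).N (ℓ + 1)),
      (spikeNet d L m c bb w hL).hidden (ℓ + 1) x i
        = (w ^ ℓ * ∏ t ∈ Finset.Icc 1 ℓ, (sN d L m t : ℝ)) * relu (bb - c * ∑ j, x j) := by
  intro ℓ
  induction ℓ with
  | zero =>
    intro i
    show relu ((Matrix.mulVec _ _) i + _) = _
    have e1 : Finset.Icc 1 0 = (∅ : Finset ℕ) := Finset.Icc_eq_empty (by norm_num)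
    have hsum : ∑ j : Fin ((spikeNet d L m c bb w hL).N 0),
        x (Fin.cast (spikeNet d L m c bb w hL).hN0 j) = ∑ j : Fin d, x j :=
      Equiv.sum_comp (finCongr (spikeNet d L m c bb w hL).hN0) x
    simp only [Matrix.mulVec, dotProduct, NeuralNet.hidden, Function.comp]
    have hA : ∀ (i : Fin ((spikeNet d L m c bb w hL).N 1))
        (j : Fin ((spikeNet d L m c bb w hL).N 0)),
        (spikeNet d L m c bb w hL).A 0 i j = -c := by intro _ _; simp [spikeNet]
    have hb : (spikeNet d L m c bb w hL).b 0 i = bb := by simp [spikeNet]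
    simp only [hA, hb, e1, Finset.prod_empty, pow_zero, mul_one, one_mul]
    have : ∑ j : Fin ((spikeNet d L m c bb w hL).N 0),
        -c * x (Fin.cast (spikeNet d L m c bb w hL).hN0 j) = -(c * ∑ j : Fin d, x j) := by
      rw [← Finset.mul_sum, hsum]; ring
    rw [this]
    congr 1
    ring
  | succ ℓ ih =>
    intro i
    show relu ((Matrix.mulVec _ _) i + _) = _
    have hA : ∀ (i : Fin ((spikeNet d L m c bb w hL).N (ℓ + 2)))
        (j : Fin ((spikeNet d L m c bb w hL).N (ℓ + 1))),
        (spikeNet d L m c bb w hL).A (ℓ + 1) i j = w := by intro _ _; simp [spikeNet]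
    have hb : (spikeNet d L m c bb w hL).b (ℓ + 1) i = 0 := by simp [spikeNet]
    simp only [Matrix.mulVec, dotProduct, hA, hb, add_zero]
    have hconst : ∑ j : Fin ((spikeNet d L m c bb w hL).N (ℓ + 1)),
        w * (spikeNet d L m c bb w hL).hidden (ℓ + 1) x j
        = ((spikeNet d L m c bb w hL).N (ℓ + 1) : ℝ) *
          (w * ((w ^ ℓ * ∏ t ∈ Finset.Icc 1 ℓ, (sN d L m t : ℝ)) * relu (bb - c * ∑ j, x j))) := by
      rw [Finset.sum_congr rfl (fun j _ => by rw [ih j])]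
      rw [Finset.sum_const, Finset.card_univ, Fintype.card_fin, nsmul_eq_mul]
    rw [hconst]
    have hnn : 0 ≤ ((spikeNet d L m c bb w hL).N (ℓ + 1) : ℝ) *
        (w * ((w ^ ℓ * ∏ t ∈ Finset.Icc 1 ℓ, (sN d L m t : ℝ)) * relu (bb - c * ∑ j, x j))) := by
      have h1 : (0:ℝ) ≤ ∏ t ∈ Finset.Icc 1 ℓ, (sN d L m t : ℝ) :=
        Finset.prod_nonneg fun t _ => Nat.cast_nonneg _
      have := relu_nonneg (bb - c * ∑ j, x j)
      positivity
    rw [relu_of_nonneg hnn]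
    have hN : (spikeNet d L m c bb w hL).N (ℓ + 1) = sN d L m (ℓ + 1) := rfl
    rw [hN, Finset.prod_Icc_succ_top (Nat.le_add_left 1 ℓ)]
    ring
end SpikeFacts
section SpikeFacts2

variable {d L m : ℕ} {c bb w : ℝ}

lemma spikeNet_realization (hL2 : 2 ≤ L) (hw : 0 ≤ w) :
    (spikeNet d L m c bb w (by omega)).realization
      = fun x => (w ^ (L - 1) * ∏ t ∈ Finset.Icc 1 (L - 1), (sN d L m t : ℝ))
          * relu (bb - c * ∑ j, x j) := by
  funext x
  have hL : 0 < L := by omega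
  set Φ := spikeNet d L m c bb w hL with hΦ
  have hLL : Φ.L = L := rfl
  obtain ⟨u, hu⟩ : ∃ u, L - 1 = u + 1 := ⟨L - 2, by omega⟩
  show ((Φ.A (Φ.L - 1)).mulVec (Φ.hidden (Φ.L - 1) x) + Φ.b (Φ.L - 1)) _ = _
  have hA : ∀ (i : Fin (Φ.N (Φ.L - 1 + 1))) (j : Fin (Φ.N (Φ.L - 1))),
      Φ.A (Φ.L - 1) i j = w := by
    intro _ _
    show (if Φ.L - 1 = 0 then -c else w) = w
    rw [if_neg (by rw [hLL]; omega)]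
  have hb : ∀ i : Fin (Φ.N (Φ.L - 1 + 1)), Φ.b (Φ.L - 1) i = 0 := by
    intro _
    show (if Φ.L - 1 = 0 then bb else 0) = 0
    rw [if_neg (by rw [hLL]; omega)]
  rw [Pi.add_apply, Matrix.mulVec, dotProduct]
  rw [Finset.sum_congr rfl (fun j _ => by rw [hA])]
  rw [hb]
  have hval : ∀ j : Fin (Φ.N (Φ.L - 1)), Φ.hidden (Φ.L - 1) x j
      = (w ^ u * ∏ t ∈ Finset.Icc 1 u, (sN d L m t : ℝ)) * relu (bb - c * ∑ j, x j) := by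
    rw [hLL, hu]
    exact fun j => spikeNet_hidden hL hw x u j
  rw [Finset.sum_congr rfl (fun j _ => by rw [hval j])]
  rw [Finset.sum_const, Finset.card_univ, Fintype.card_fin, nsmul_eq_mul, add_zero]
  have hNval : (Φ.N (Φ.L - 1) : ℝ) = (sN d L m (u + 1) : ℝ) := by rw [hLL, hu]; rfl
  rw [hNval, hu, Finset.prod_Icc_succ_top (Nat.le_add_left 1 u)]
  ring

lemma card_filter_odd_Icc : ∀ n : ℕ, ((Finset.Icc 1 n).filter (fun t => Odd t)).card = (n + 1) / 2 := by
  intro n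
  induction n with
  | zero => simp
  | succ n ih =>
    rw [← Finset.insert_Icc_right_eq_Icc_add_one (by omega), Finset.filter_insert]
    by_cases h : Odd (n + 1)
    · rw [if_pos h, Finset.card_insert_of_notMem (by simp)]
      rw [ih]
      have := Nat.odd_iff.mp h
      omega
    · rw [if_neg h, ih]
      have := Nat.even_iff.mp (Nat.not_odd_iff_even.mp h)
      omega

lemma sN_prod (hL : 0 < L) :
    ∏ t ∈ Finset.Icc 1 (L - 1), (sN d L m t : ℝ) = (m : ℝ) ^ (L / 2) := by
  have h1 : ∀ t ∈ (Finset.Icc 1 (L-1)).filter (fun t => Odd t), (sN d L m t : ℝ) = (m : ℝ) := by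
    intro t ht
    rw [Finset.mem_filter, Finset.mem_Icc] at ht
    have : t ≠ 0 := by omega
    simp [sN, this, ht.2, (by omega : t < L)]
  have h2 : ∀ t ∈ (Finset.Icc 1 (L-1)).filter (fun t => ¬ Odd t), (sN d L m t : ℝ) = 1 := by
    intro t ht
    rw [Finset.mem_filter, Finset.mem_Icc] at ht
    have : t ≠ 0 := by omega
    simp [sN, this, ht.2]
  rw [← Finset.prod_filter_mul_prod_filter_not (Finset.Icc 1 (L-1)) (fun t => Odd t)]
  rw [Finset.prod_congr rfl h1, Finset.prod_congr rfl h2, Finset.prod_const, Finset.prod_const,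
    one_pow, mul_one, card_filter_odd_Icc]
  congr 1
  omega

end SpikeFacts2
section SpikeFacts3

variable {d L m : ℕ} {c bb w : ℝ}

lemma sN_le (hm : 1 ≤ m) (t : ℕ) (ht : t ≠ 0) : sN d L m t ≤ m := by
  rw [sN, if_neg ht]
  split <;> omega

lemma spikeNet_weightCount (hL2 : 2 ≤ L) (hm : 1 ≤ m) :
    (spikeNet d L m c bb w (by omega)).weightCount ≤ m * (d + 2 * L) := by
  have hL : 0 < L := by omega
  set Φ := spikeNet d L m c bb w hL with hΦ
  have hterm : ∀ ℓ ∈ Finset.range L,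
      ((Finset.univ.filter fun ij : Fin (Φ.N (ℓ + 1)) × Fin (Φ.N ℓ) => Φ.A ℓ ij.1 ij.2 ≠ 0).card
        + (Finset.univ.filter fun i : Fin (Φ.N (ℓ + 1)) => Φ.b ℓ i ≠ 0).card)
      ≤ (if ℓ = 0 then m * (d + 1) else 2 * m) := by
    intro ℓ _
    have h1 : (Finset.univ.filter fun ij : Fin (Φ.N (ℓ + 1)) × Fin (Φ.N ℓ) =>
        Φ.A ℓ ij.1 ij.2 ≠ 0).card ≤ Φ.N (ℓ + 1) * Φ.N ℓ := by
      refine le_trans (Finset.card_filter_le _ _) ?_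
      rw [Finset.card_univ, Fintype.card_prod, Fintype.card_fin, Fintype.card_fin]
    have h2 : (Finset.univ.filter fun i : Fin (Φ.N (ℓ + 1)) => Φ.b ℓ i ≠ 0).card
        ≤ Φ.N (ℓ + 1) := by
      refine le_trans (Finset.card_filter_le _ _) ?_
      rw [Finset.card_univ, Fintype.card_fin]
    by_cases h : ℓ = 0
    · subst h
      rw [if_pos rfl]
      have e1 : Φ.N 1 = m := by
        show sN d L m 1 = m
        rw [sN, if_neg one_ne_zero, if_pos ⟨by omega, odd_one⟩]
      have e0 : Φ.N 0 = d := Φ.hN0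
      have h1' : (Finset.univ.filter fun ij : Fin (Φ.N (0 + 1)) × Fin (Φ.N 0) =>
          Φ.A 0 ij.1 ij.2 ≠ 0).card ≤ m * d := le_trans h1 (le_of_eq (by rw [e1, e0]))
      have h2' : (Finset.univ.filter fun i : Fin (Φ.N (0 + 1)) => Φ.b 0 i ≠ 0).card ≤ m :=
        le_trans h2 (le_of_eq e1)
      nlinarith
    · rw [if_neg h]
      have key : Φ.N (ℓ + 1) * Φ.N ℓ ≤ m := by
        show sN d L m (ℓ + 1) * sN d L m ℓ ≤ m
        rcases Nat.even_or_odd ℓ with he | ho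
        · have : sN d L m ℓ = 1 := by
            rw [sN, if_neg h, if_neg]
            rintro ⟨-, hodd⟩
            exact (Nat.not_odd_iff_even.mpr he) hodd
          rw [this, mul_one]
          exact sN_le hm _ (Nat.succ_ne_zero ℓ)
        · have : sN d L m (ℓ + 1) = 1 := by
            rw [sN, if_neg (Nat.succ_ne_zero ℓ), if_neg]
            rintro ⟨-, hodd⟩
            rw [Nat.odd_add_one] at hodd
            exact hodd ho
          rw [this, one_mul]
          exact sN_le hm _ h
      have key2 : Φ.N (ℓ + 1) ≤ m := sN_le (d := d) (L := L) hm _ (Nat.succ_ne_zero ℓ)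
      omega
  have hsum : Φ.weightCount ≤ ∑ ℓ ∈ Finset.range L, (if ℓ = 0 then m * (d + 1) else 2 * m) :=
    Finset.sum_le_sum hterm
  obtain ⟨v, hv⟩ : ∃ v, L = v + 2 := ⟨L - 2, by omega⟩
  subst hv
  rw [show v + 2 = (v + 1) + 1 by omega, Finset.sum_range_succ'] at hsum
  simp only [Nat.succ_ne_zero, if_neg, if_pos rfl, reduceIte] at hsum
  rw [Finset.sum_const, Finset.card_range, smul_eq_mul] at hsum
  refine le_trans hsum ?_
  nlinarith

lemma spikeNet_bounded (hL : 0 < L) {C : ℝ≥0∞} (hc : 0 ≤ c) (hcC : ENNReal.ofReal c ≤ C)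
    (hbb : |bb| ≤ c) (hwc : |w| ≤ c) :
    (spikeNet d L m c bb w hL).weightsBoundedBy C := by
  intro ℓ _
  constructor
  · intro i j
    show ENNReal.ofReal |if ℓ = 0 then -c else w| ≤ C
    by_cases h : ℓ = 0
    · rw [if_pos h, abs_neg, abs_of_nonneg hc]
      exact hcC
    · rw [if_neg h]
      exact le_trans (ENNReal.ofReal_le_ofReal hwc) hcC
  · intro i
    show ENNReal.ofReal |if ℓ = 0 then bb else 0| ≤ C
    by_cases h : ℓ = 0
    · rw [if_pos h]
      exact le_trans (ENNReal.ofReal_le_ofReal hbb) hcC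
    · rw [if_neg h]
      simp

lemma spike_formula_continuous (K : ℝ) :
    Continuous (fun x : Fin d → ℝ => K * relu (bb - c * ∑ j, x j)) := by
  simp only [relu]
  exact continuous_const.mul (Continuous.max continuous_const
    (continuous_const.sub (continuous_const.mul
      (continuous_finset_sum _ fun i _ => continuous_apply i))))

end SpikeFacts3
section FinalAux

lemma enat_le_of_lt_coe {L : ℕ} (x : ℕ∞) (h : x < (L : ℕ∞)) : x ≤ ((L - 1 : ℕ) : ℕ∞) := by
  induction x using ENat.recTopCoe with
  | top => exact absurd h (not_top_lt)
  | coe a =>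
    rw [Nat.cast_le]
    rw [Nat.cast_lt] at h
    omega

end FinalAux
section Construction

lemma spike_construction
    (d : ℕ) (hd : 0 < d) (ℓf cf : ℕ → ℕ∞)
    (hℓ2 : ∀ n', 2 ≤ ℓf n')
    (p α : ℝ) (hp : 0 < p) (hα : 0 < α)
    (L n k : ℕ) (hL2 : 2 ≤ L)
    (hLn : ∀ n' ≥ n, (L : ℕ∞) ≤ ℓf n')
    (hn : 2 * (d + 2 * L) ≤ n)
    (c : ℝ) (hc1' : 1 ≤ c)
    (hcb : ∀ n' ≥ n, ENNReal.ofReal c ≤ ((cf n' : ℕ∞) : ℝ≥0∞))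
    (hbudget : (max 1 (k:ℝ)) * ((max 1 (k:ℝ)) * (n:ℝ) ^ α) ^ (p / (d:ℝ))
        ≤ c ^ L * ((n / (d + 2 * L) : ℕ) : ℝ) ^ (L / 2)) :
    ∃ g : (Fin d → ℝ) → ℝ,
      ContinuousOn g (unitCube d) ∧
      ANorm d ℓf (fun n' => ((cf n' : ℕ∞) : ℝ≥0∞)) (unitCube d) (ENNReal.ofReal p) α g ≤ 1 ∧
      ((k : ℕ) : ℝ≥0∞) ≤ supNormCube d g := by
  set cfE : ℕ → ℝ≥0∞ := fun i => ((cf i : ℕ∞) : ℝ≥0∞) with hcfE_def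
  have hdL : 0 < d + 2 * L := by omega
  have hn1 : 1 ≤ n := by omega
  have hnR : (1:ℝ) ≤ (n:ℝ) := by exact_mod_cast hn1
  have hn0R : (0:ℝ) < (n:ℝ) := lt_of_lt_of_le one_pos hnR
  set h : ℝ := max 1 (k:ℝ) with hh_def
  have hh1 : 1 ≤ h := le_max_left _ _
  have hh0 : 0 < h := lt_of_lt_of_le one_pos hh1
  set m : ℕ := n / (d + 2 * L) with hm_def
  have hm1 : 1 ≤ m := (Nat.one_le_div_iff hdL).mpr (by omega)
  have hc0 : 0 < c := lt_of_lt_of_le one_pos hc1'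
  have hnα : (1:ℝ) ≤ (n:ℝ) ^ α := Real.one_le_rpow hnR hα.le
  have hbase1 : (1:ℝ) ≤ h * (n:ℝ) ^ α := by nlinarith [hh1, hnα]
  have hbase0 : (0:ℝ) < h * (n:ℝ) ^ α := lt_of_lt_of_le one_pos hbase1
  set Λ : ℝ := (h * (n:ℝ) ^ α) ^ (p / (d:ℝ)) with hΛ_def
  have hΛ1 : 1 ≤ Λ := Real.one_le_rpow hbase1 (by positivity)
  have hΛ0 : 0 < Λ := lt_of_lt_of_le one_pos hΛ1
  set bb : ℝ := c / Λ with hbb_def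
  have hbb0 : 0 < bb := div_pos hc0 hΛ0
  set PP : ℝ := (m:ℝ) ^ (L / 2) with hPP_def
  have hPP0 : (0:ℝ) < PP := by positivity
  set Astar : ℝ := h * Λ / c with hAstar_def
  have hAstar0 : 0 < Astar := by positivity
  set w : ℝ := (Astar / PP) ^ (((L - 1 : ℕ) : ℝ))⁻¹ with hw_def
  have hL1cast : ((L - 1 : ℕ) : ℝ) ≠ 0 := by
    have h9 : L - 1 ≠ 0 := by omega
    exact_mod_cast h9
  have hw0 : 0 < w := Real.rpow_pos_of_pos (div_pos hAstar0 hPP0) _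
  have hwpow : w ^ (L - 1) * PP = Astar := by
    have h9 : w ^ (L - 1) = Astar / PP := by
      rw [hw_def, ← Real.rpow_natCast ((Astar / PP) ^ (((L - 1 : ℕ) : ℝ))⁻¹) (L - 1),
        ← Real.rpow_mul (le_of_lt (div_pos hAstar0 hPP0)), inv_mul_cancel₀ hL1cast,
        Real.rpow_one]
    rw [h9, div_mul_cancel₀ _ (ne_of_gt hPP0)]
  have hbudget' : h * Λ ≤ c ^ L * PP := hbudget
  have hwc : w ≤ c := by
    have h1 : Astar ≤ c ^ (L - 1) * PP := by
      rw [hAstar_def, div_le_iff₀ hc0]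
      calc h * Λ ≤ c ^ L * PP := hbudget'
        _ = c ^ (L - 1) * PP * c := by
            have h8 : c ^ (L - 1) * c = c ^ L := by
              rw [← pow_succ]
              congr 1
              omega
            rw [← h8]; ring
    have h2 : Astar / PP ≤ c ^ (L - 1) := (div_le_iff₀ hPP0).mpr (by linarith [h1])
    calc w ≤ (c ^ (L - 1)) ^ (((L - 1 : ℕ) : ℝ))⁻¹ :=
          Real.rpow_le_rpow (le_of_lt (div_pos hAstar0 hPP0)) h2 (by positivity)
      _ = c := by
          rw [← Real.rpow_natCast c (L - 1), ← Real.rpow_mul hc0.le,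
            mul_inv_cancel₀ hL1cast, Real.rpow_one]
  have hLpos : 0 < L := by omega
  set Φ := spikeNet d L m c bb w hLpos with hΦ_def
  set F : (Fin d → ℝ) → ℝ := fun x => Astar * relu (bb - c * ∑ j, x j) with hF_def
  have hreal : Φ.realization = F := by
    rw [hΦ_def, spikeNet_realization hL2 hw0.le]
    funext x
    rw [sN_prod hLpos, ← hPP_def, hwpow]
  have hF0 : F 0 = h := by
    rw [hF_def]
    simp only [Pi.zero_apply, Finset.sum_const_zero, mul_zero, sub_zero]
    rw [relu_of_nonneg hbb0.le, hAstar_def, hbb_def]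
    field_simp
  have h0cube : (0 : Fin d → ℝ) ∈ unitCube d := by
    constructor
    · exact le_refl _
    · intro j; exact zero_le_one
  have hsup : ((k : ℕ) : ℝ≥0∞) ≤ supNormCube d F := by
    have h1 : ENNReal.ofReal |F 0| ≤ supNormCube d F :=
      le_iSup₂ (f := fun x (_ : x ∈ unitCube d) => ENNReal.ofReal |F x|) 0 h0cube
    refine le_trans ?_ h1
    rw [hF0, abs_of_pos hh0]
    calc ((k : ℕ) : ℝ≥0∞) = ENNReal.ofReal (k : ℝ) := (ENNReal.ofReal_natCast k).symm
      _ ≤ ENNReal.ofReal h := ENNReal.ofReal_le_ofReal (le_max_right _ _)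
  have hkey : h * (Λ⁻¹) ^ ((d:ℝ) * (1/p)) = (n:ℝ) ^ (-α) := by
    have hdp : (p / (d:ℝ)) * ((d:ℝ) * (1/p)) = 1 := by
      have hd' : (d:ℝ) ≠ 0 := by exact_mod_cast hd.ne'
      field_simp
    rw [Real.inv_rpow hΛ0.le, hΛ_def, ← Real.rpow_mul hbase0.le, hdp, Real.rpow_one,
      Real.rpow_neg hn0R.le, mul_inv, ← mul_assoc, mul_inv_cancel₀ hh0.ne', one_mul]
  set p' : ℝ≥0∞ := ENNReal.ofReal p with hp'_def
  have hp'0 : p' ≠ 0 := by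
    rw [hp'_def, Ne, ENNReal.ofReal_eq_zero]
    linarith
  have hp'top : p' ≠ ⊤ := ENNReal.ofReal_ne_top
  set box : Set (Fin d → ℝ) := Set.Icc 0 (fun _ => Λ⁻¹) with hbox_def
  have hle : ∀ x ∈ unitCube d, |F x| ≤ box.indicator (fun _ => h) x := by
    intro x hx
    have hx0 : ∀ j, 0 ≤ x j := fun j => hx.1 j
    have ht0 : 0 ≤ ∑ j, x j := Finset.sum_nonneg fun j _ => hx0 j
    by_cases hcase : bb - c * ∑ j, x j ≤ 0
    · have h9 : F x = 0 := by
        show Astar * relu (bb - c * ∑ j, x j) = 0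
        rw [show relu (bb - c * ∑ j, x j) = 0 from max_eq_left hcase, mul_zero]
      rw [h9, abs_zero]
      exact Set.indicator_nonneg (fun _ _ => hh0.le) x
    · push_neg at hcase
      have hbbe : bb = c * Λ⁻¹ := by rw [hbb_def]; ring
      have hsum_le : ∑ j, x j ≤ Λ⁻¹ := by
        have h1 : c * ∑ j, x j < c * Λ⁻¹ := by rw [← hbbe]; linarith
        exact le_of_lt ((mul_lt_mul_iff_right₀ hc0).mp h1)
      have hxbox : x ∈ box := by
        refine ⟨hx.1, fun j => ?_⟩
        exact le_trans (Finset.single_le_sum (fun i _ => hx0 i) (Finset.mem_univ j)) hsum_le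
      rw [Set.indicator_of_mem hxbox]
      have hFx : F x = Astar * relu (bb - c * ∑ j, x j) := rfl
      have hrel : relu (bb - c * ∑ j, x j) ≤ bb := by
        rw [relu_of_nonneg (le_of_lt hcase)]
        nlinarith
      have hF_nonneg : 0 ≤ F x := by
        rw [hFx]; exact mul_nonneg hAstar0.le (relu_nonneg _)
      rw [abs_of_nonneg hF_nonneg, hFx]
      calc Astar * relu (bb - c * ∑ j, x j) ≤ Astar * bb :=
            mul_le_mul_of_nonneg_left hrel hAstar0.le
        _ = h := by rw [hAstar_def, hbb_def]; field_simp
  have hlp : eLpNorm F p' (volume.restrict (unitCube d)) ≤ ENNReal.ofReal ((n:ℝ) ^ (-α)) := by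
    have step1 : eLpNorm F p' (volume.restrict (unitCube d))
        ≤ eLpNorm (box.indicator fun _ => h) p' (volume.restrict (unitCube d)) := by
      apply eLpNorm_mono_ae
      refine (MeasureTheory.ae_restrict_iff' measurableSet_Icc).mpr (Filter.Eventually.of_forall ?_)
      intro x hx
      rw [Real.norm_eq_abs, Real.norm_eq_abs]
      exact le_trans (hle x hx) (le_abs_self _)
    have step2 : eLpNorm (box.indicator fun _ => h) p' (volume.restrict (unitCube d))
        ≤ eLpNorm (box.indicator fun _ => h) p' volume :=
      eLpNorm_mono_measure _ Measure.restrict_le_self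
    have step3 : eLpNorm (box.indicator fun _ => h) p' volume
        = ‖h‖₊ * (volume box) ^ (1 / p'.toReal) :=
      eLpNorm_indicator_const measurableSet_Icc hp'0 hp'top
    have hvol : volume box = (ENNReal.ofReal Λ⁻¹) ^ (d:ℕ) := by
      rw [hbox_def, Real.volume_Icc_pi]
      simp
    have step4 : ‖h‖ₑ * (volume box) ^ (1 / p'.toReal)
        = ENNReal.ofReal ((n:ℝ) ^ (-α)) := by
      rw [hvol, Real.enorm_eq_ofReal hh0.le,
        ← ENNReal.rpow_natCast (ENNReal.ofReal Λ⁻¹) d, ← ENNReal.rpow_mul,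
        hp'_def, ENNReal.toReal_ofReal hp.le,
        ENNReal.ofReal_rpow_of_pos (inv_pos.mpr hΛ0),
        ← ENNReal.ofReal_mul hh0.le, hkey]
    calc eLpNorm F p' (volume.restrict (unitCube d)) ≤ _ := step1
      _ ≤ _ := step2
      _ = _ := step3
      _ = _ := step4
  have hWle : Φ.weightCount ≤ n := by
    refine le_trans (spikeNet_weightCount hL2 hm1) ?_
    rw [hm_def]
    exact Nat.div_mul_le_self n (d + 2 * L)
  have hmem : ∀ n' : ℕ, n ≤ n' → F ∈ NNSet d ℓf cfE n' := by
    intro n' hn'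
    refine ⟨Φ, hreal.symm, le_trans hWle hn', hLn n' hn', ?_⟩
    exact spikeNet_bounded hLpos hc0.le (hcb n' hn')
      (by rw [abs_of_pos hbb0]; exact div_le_self hc0.le hΛ1)
      (by rw [abs_of_pos hw0]; exact hwc)
  have hGamma : Gamma d ℓf cfE (unitCube d) p' α F ≤ 1 := by
    rw [Gamma]
    apply max_le
    · refine le_trans hlp ?_
      rw [← ENNReal.ofReal_one]
      exact ENNReal.ofReal_le_ofReal (Real.rpow_le_one_of_one_le_of_nonpos hnR (by linarith))
    · apply iSup_le
      intro j
      by_cases hj : n ≤ j + 1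
      · have hzero : dLp d (unitCube d) p' F (NNSet d ℓf cfE (j+1)) = 0 := by
          apply le_antisymm _ zero_le
          refine le_trans (iInf₂_le F (hmem (j+1) hj)) ?_
          rw [sub_self, eLpNorm_zero]
        rw [hzero, mul_zero]
        exact zero_le_one
      · push_neg at hj
        have hdle : dLp d (unitCube d) p' F (NNSet d ℓf cfE (j+1))
            ≤ ENNReal.ofReal ((n:ℝ) ^ (-α)) := by
          refine le_trans (iInf₂_le (fun _ => (0:ℝ)) (zeroNet_mem d (j+1) ℓf cfE (hℓ2 _))) ?_
          have h9 : F - (fun _ => (0:ℝ)) = F := by funext x; simp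
          rw [h9]
          exact hlp
        calc ((j + 1 : ℕ) : ℝ≥0∞) ^ α * dLp d (unitCube d) p' F (NNSet d ℓf cfE (j+1))
            ≤ ((j + 1 : ℕ) : ℝ≥0∞) ^ α * ENNReal.ofReal ((n:ℝ) ^ (-α)) :=
              mul_le_mul_right hdle _
          _ ≤ 1 := by
              rw [← ENNReal.ofReal_natCast (j+1),
                ENNReal.ofReal_rpow_of_pos (by exact_mod_cast Nat.succ_pos j),
                ← ENNReal.ofReal_mul (by positivity), ← ENNReal.ofReal_one]
              apply ENNReal.ofReal_le_ofReal
              have hle1 : ((j + 1 : ℕ) : ℝ) ^ α ≤ (n:ℝ) ^ α := by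
                apply Real.rpow_le_rpow (by positivity) _ hα.le
                exact_mod_cast hj.le
              calc ((j + 1 : ℕ):ℝ) ^ α * (n:ℝ) ^ (-α) ≤ (n:ℝ) ^ α * (n:ℝ) ^ (-α) :=
                    mul_le_mul_of_nonneg_right hle1 (Real.rpow_nonneg hn0R.le _)
                _ = 1 := by rw [← Real.rpow_add hn0R, add_neg_cancel, Real.rpow_zero]
  have hAN : ANorm d ℓf cfE (unitCube d) p' α F ≤ 1 := by
    rw [ANorm]
    apply sInf_le
    refine ⟨1, one_pos, ENNReal.ofReal_one.symm, ?_⟩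
    have h9 : (fun x => F x / 1) = F := by funext x; rw [div_one]
    rw [h9]
    exact hGamma
  exact ⟨F, (spike_formula_continuous Astar).continuousOn, hAN, hsup⟩

end Construction

/-- Theorem 3.6 / `thm:SobolevTypeEmbeddingNecessary`, first part:
if `p ∈ (0,∞)` and `γ*(ℓ,c) > α·p/d`, then `A^α_{ℓ,c,p}([0,1]^d) ↪ C([0,1]^d)` fails:
there is a sequence of continuous functions with approximation-space norm at most `1`
whose sup norms on `[0,1]^d` tend to `∞`. -/
theorem no_embedding_into_continuous
    (d : ℕ) (hd : 0 < d) (ℓf cf : ℕ → ℕ∞)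
    (hℓmono : Monotone ℓf) (hcmono : Monotone cf)
    (hℓ2 : ∀ n, 2 ≤ ℓf n) (hc1 : ∀ n, 1 ≤ cf n)
    (p : ℝ) (hp : 0 < p) (α : ℝ) (hα : 0 < α)
    (hcond : ENNReal.ofReal (α * p / (d : ℝ)) < gammaStar ℓf (fun n => (cf n : ℝ≥0∞))) :
    ∃ f : ℕ → (Fin d → ℝ) → ℝ,
      (∀ k, ContinuousOn (f k) (unitCube d)) ∧
      (∀ k, ANorm d ℓf (fun n => (cf n : ℝ≥0∞)) (unitCube d) (ENNReal.ofReal p) α (f k) ≤ 1) ∧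
      Filter.Tendsto (fun k => supNormCube d (f k)) Filter.atTop (nhds ⊤) := by
  classical
  rw [gammaStar, lt_sSup_iff] at hcond
  obtain ⟨t, ⟨γ, hγ0, rfl, L₀, hL₀1, hL₀lstar, hlimsup⟩, hlt⟩ := hcond
  have hγgt : α * p / (d : ℝ) < γ :=
    (ENNReal.ofReal_lt_ofReal_iff_of_nonneg (by positivity)).mp hlt
  set L : ℕ := max 2 L₀ with hL_def
  have hL2 : 2 ≤ L := le_max_left _ _
  have hLlstar : (L : ℕ∞) ≤ lstar ℓf := by
    rcases max_choice 2 L₀ with hmc | hmc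
    · rw [hL_def, hmc]
      refine le_trans ?_ (le_iSup (fun n => ℓf n) 0)
      exact_mod_cast hℓ2 0
    · rw [hL_def, hmc]
      exact hL₀lstar
  obtain ⟨n₀, hn₀⟩ : ∃ n₀, (L : ℕ∞) ≤ ℓf n₀ := by
    by_contra hcon
    push_neg at hcon
    have hub : lstar ℓf ≤ ((L - 1 : ℕ) : ℕ∞) := iSup_le fun n => enat_le_of_lt_coe _ (hcon n)
    have hbad : (L : ℕ∞) ≤ ((L - 1 : ℕ) : ℕ∞) := le_trans hLlstar hub
    rw [Nat.cast_le] at hbad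
    omega
  have hLn : ∀ n' ≥ n₀, (L : ℕ∞) ≤ ℓf n' := fun n' hn' => le_trans hn₀ (hℓmono hn')
  set l : ℝ≥0∞ := Filter.limsup
      (fun n : ℕ => (cf n : ℝ≥0∞) ^ L₀ * (n : ℝ≥0∞) ^ (L₀ / 2) / (n : ℝ≥0∞) ^ (γ : ℝ))
      Filter.atTop with hl_def
  set δ : ℝ≥0∞ := min 1 (l / 2) with hδ_def
  have hδ0 : 0 < δ := lt_min one_pos (ENNReal.half_pos (ne_of_gt hlimsup))
  have hδtop : δ ≠ ⊤ := (lt_of_le_of_lt (min_le_left _ _) ENNReal.one_lt_top).ne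
  have hδl : δ < l := by
    by_cases htop : l = ⊤
    · rw [htop]
      exact lt_of_le_of_lt (min_le_left _ _) ENNReal.one_lt_top
    · exact lt_of_le_of_lt (min_le_right _ _) (ENNReal.half_lt_self (ne_of_gt hlimsup) htop)
  have hfreq : ∃ᶠ n in Filter.atTop,
      δ < (cf n : ℝ≥0∞) ^ L₀ * (n : ℝ≥0∞) ^ (L₀ / 2) / (n : ℝ≥0∞) ^ (γ : ℝ) :=
    Filter.frequently_lt_of_lt_limsup (by isBoundedDefault) hδl
  set δ₀ : ℝ := δ.toReal with hδ₀_def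
  have hδ₀pos : 0 < δ₀ := ENNReal.toReal_pos (ne_of_gt hδ0) hδtop
  set q : ℕ := d + 2 * L with hq_def
  have key : ∀ k : ℕ, ∃ g : (Fin d → ℝ) → ℝ,
      ContinuousOn g (unitCube d) ∧
      ANorm d ℓf (fun n => (cf n : ℝ≥0∞)) (unitCube d) (ENNReal.ofReal p) α g ≤ 1 ∧
      ((k : ℕ) : ℝ≥0∞) ≤ supNormCube d g := by
    intro k
    set h : ℝ := max 1 (k : ℝ) with hh_def
    have hh1 : (1:ℝ) ≤ h := le_max_left _ _
    have hh0 : (0:ℝ) < h := lt_of_lt_of_le one_pos hh1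
    set C : ℝ := h ^ (1 + p / (d:ℝ)) * ((2 * q : ℕ) : ℝ) ^ L with hC_def
    have h2q0 : (0:ℝ) < ((2 * q : ℕ) : ℝ) := by
      have : 0 < 2 * q := by omega
      exact_mod_cast this
    have hCpos : 0 < C := by
      rw [hC_def]
      positivity
    have htend : Filter.Tendsto (fun n : ℕ => (n:ℝ) ^ (γ - α * p / (d:ℝ)))
        Filter.atTop Filter.atTop :=
      (tendsto_rpow_atTop (by linarith)).comp tendsto_natCast_atTop_atTop
    have hev : ∀ᶠ n : ℕ in Filter.atTop,
        (C / δ₀ ≤ (n:ℝ) ^ (γ - α * p / (d:ℝ))) ∧ max n₀ (2 * q) ≤ n ∧ 1 ≤ n :=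
      (htend.eventually_ge_atTop (C / δ₀)).and
        ((Filter.eventually_ge_atTop (max n₀ (2 * q))).and
          (Filter.eventually_ge_atTop 1))
    obtain ⟨n, hδu, hCn, hnmax, hn1⟩ := (hfreq.and_eventually hev).exists
    have hn₀n : n₀ ≤ n := le_trans (le_max_left _ _) hnmax
    have hn2q : 2 * q ≤ n := le_trans (le_max_right _ _) hnmax
    have hnR1 : (1:ℝ) ≤ (n:ℝ) := by exact_mod_cast hn1
    have hn0R : (0:ℝ) < (n:ℝ) := lt_of_lt_of_le one_pos hnR1
    -- eventual bound gives the budget in real form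
    have hCbound : C * (n:ℝ) ^ (α * p / (d:ℝ)) ≤ δ₀ * (n:ℝ) ^ γ := by
      have h1 : C ≤ δ₀ * (n:ℝ) ^ (γ - α * p / (d:ℝ)) := by
        rw [div_le_iff₀ hδ₀pos] at hCn
        linarith
      calc C * (n:ℝ) ^ (α * p / (d:ℝ))
          ≤ (δ₀ * (n:ℝ) ^ (γ - α * p / (d:ℝ))) * (n:ℝ) ^ (α * p / (d:ℝ)) :=
            mul_le_mul_of_nonneg_right h1 (Real.rpow_nonneg hn0R.le _)
        _ = δ₀ * (n:ℝ) ^ γ := by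
            rw [mul_assoc, ← Real.rpow_add hn0R, sub_add_cancel]
    have hΛid : h * (h * (n:ℝ) ^ α) ^ (p / (d:ℝ))
        = h ^ (1 + p / (d:ℝ)) * (n:ℝ) ^ (α * p / (d:ℝ)) := by
      rw [Real.mul_rpow hh0.le (Real.rpow_nonneg hn0R.le _),
        ← Real.rpow_mul hn0R.le, ← mul_assoc]
      congr 1
      · rw [Real.rpow_add hh0, Real.rpow_one]
      · congr 1
        ring
    -- ℝ≥0∞ inequality at n, upgraded from L₀ to L
    have hnen0 : ((n : ℝ≥0∞)) ^ (γ:ℝ) ≠ 0 := by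
      apply ne_of_gt
      apply ENNReal.rpow_pos
      · exact_mod_cast Nat.pos_of_ne_zero (by omega)
      · exact ENNReal.natCast_ne_top n
    have hmul0 : δ * (n : ℝ≥0∞) ^ (γ:ℝ) ≤ (cf n : ℝ≥0∞) ^ L₀ * (n : ℝ≥0∞) ^ (L₀ / 2) :=
      ENNReal.mul_le_of_le_div hδu.le
    have hcfE1 : (1 : ℝ≥0∞) ≤ (cf n : ℝ≥0∞) := by
      have h9 := hc1 n
      exact_mod_cast ENat.toENNReal_le.mpr h9
    have hn1E : (1 : ℝ≥0∞) ≤ (n : ℝ≥0∞) := by exact_mod_cast hn1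
    have hupg : (cf n : ℝ≥0∞) ^ L₀ * (n : ℝ≥0∞) ^ (L₀ / 2)
        ≤ (cf n : ℝ≥0∞) ^ L * (n : ℝ≥0∞) ^ (L / 2) :=
      mul_le_mul' (pow_le_pow_right' hcfE1 (le_max_right 2 L₀))
        (pow_le_pow_right' hn1E (Nat.div_le_div_right (le_max_right 2 L₀)))
    have hmul : δ * (n : ℝ≥0∞) ^ (γ:ℝ) ≤ (cf n : ℝ≥0∞) ^ L * (n : ℝ≥0∞) ^ (L / 2) :=
      le_trans hmul0 hupg
    set m : ℕ := n / q with hm_def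
    have hm1 : 1 ≤ m := (Nat.one_le_div_iff (by omega)).mpr (by omega)
    have hn2qm : (n : ℝ) ≤ ((2 * q : ℕ) : ℝ) * (m : ℝ) := by
      have hdm : q * m + n % q = n := by rw [hm_def]; exact Nat.div_add_mod n q
      have hmod : n % q < q := Nat.mod_lt n (show 0 < q by omega)
      have hdmR : (q:ℝ) * (m:ℝ) + ((n % q : ℕ):ℝ) = (n:ℝ) := by exact_mod_cast hdm
      have hmodR : ((n % q : ℕ):ℝ) < (q:ℝ) := by exact_mod_cast hmod
      have hmR : (1:ℝ) ≤ (m:ℝ) := by exact_mod_cast hm1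
      have hqR0 : (0:ℝ) < (q:ℝ) := by exact_mod_cast (show 0 < q by omega)
      have h2qR : ((2 * q : ℕ) : ℝ) = 2 * (q:ℝ) := by push_cast; ring
      rw [h2qR]
      nlinarith [mul_nonneg (sub_nonneg.mpr hmR) hqR0.le]
    have hmpow : (n:ℝ) ^ (L / 2) ≤ ((2 * q : ℕ) : ℝ) ^ L * (m:ℝ) ^ (L / 2) := by
      calc (n:ℝ) ^ (L / 2) ≤ (((2 * q : ℕ) : ℝ) * (m : ℝ)) ^ (L / 2) :=
            pow_le_pow_left₀ hn0R.le hn2qm _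
        _ = ((2 * q : ℕ) : ℝ) ^ (L / 2) * (m:ℝ) ^ (L / 2) := mul_pow _ _ _
        _ ≤ ((2 * q : ℕ) : ℝ) ^ L * (m:ℝ) ^ (L / 2) := by
            apply mul_le_mul_of_nonneg_right _ (by positivity)
            apply pow_le_pow_right₀ _ (Nat.div_le_self L 2)
            have h9 : (1:ℕ) ≤ 2 * q := by omega
            exact_mod_cast h9
    by_cases htop : cf n = ⊤
    · set c : ℝ := max 1 (h * (h * (n:ℝ) ^ α) ^ (p / (d:ℝ))) with hc_def
      have hc1R : (1:ℝ) ≤ c := le_max_left _ _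
      have hcb : ∀ n' ≥ n, ENNReal.ofReal c ≤ ((cf n' : ℕ∞) : ℝ≥0∞) := by
        intro n' hn'
        have h9 : cf n' = ⊤ := top_le_iff.mp (htop ▸ hcmono hn')
        rw [h9, ENat.toENNReal_top]
        exact le_top
      have hbudget : h * (h * (n:ℝ) ^ α) ^ (p / (d:ℝ)) ≤ c ^ L * ((n / q : ℕ) : ℝ) ^ (L / 2) := by
        have h1 : h * (h * (n:ℝ) ^ α) ^ (p / (d:ℝ)) ≤ c := le_max_right _ _
        have h2 : c ≤ c ^ L := le_self_pow₀ hc1R (by omega)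
        have h3 : (1:ℝ) ≤ ((n / q : ℕ) : ℝ) ^ (L / 2) := by
          apply one_le_pow₀
          exact_mod_cast hm1
        calc h * (h * (n:ℝ) ^ α) ^ (p / (d:ℝ)) ≤ c := h1
          _ = c * 1 := (mul_one c).symm
          _ ≤ c ^ L * ((n / q : ℕ) : ℝ) ^ (L / 2) := mul_le_mul h2 h3 zero_le_one (by positivity)
      exact spike_construction d hd ℓf cf hℓ2 p α hp hα L n k hL2
        (fun n' hn' => hLn n' (le_trans hn₀n hn')) (by omega) c hc1R hcb hbudget
    · -- finite weight bound
      obtain ⟨a, ha⟩ : ∃ a : ℕ, (a : ℕ∞) = cf n := WithTop.ne_top_iff_exists.mp htop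
      set c : ℝ := ((cf n : ℝ≥0∞)).toReal with hc_def
      have hcfin : (cf n : ℝ≥0∞) ≠ ⊤ := by
        rw [← ha, ENat.toENNReal_coe]
        exact ENNReal.natCast_ne_top a
      have hc1R : (1:ℝ) ≤ c := by
        rw [hc_def, ← ENNReal.toReal_one]
        exact ENNReal.toReal_mono hcfin hcfE1
      have hcofReal : ENNReal.ofReal c = (cf n : ℝ≥0∞) := by
        rw [hc_def, ENNReal.ofReal_toReal hcfin]
      have hcb : ∀ n' ≥ n, ENNReal.ofReal c ≤ ((cf n' : ℕ∞) : ℝ≥0∞) := by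
        intro n' hn'
        rw [hcofReal]
        exact ENat.toENNReal_le.mpr (hcmono hn')
      -- convert hmul to reals
      have hreal : δ₀ * (n:ℝ) ^ γ ≤ c ^ L * (n:ℝ) ^ (L / 2) := by
        have hfin2 : (cf n : ℝ≥0∞) ^ L * (n : ℝ≥0∞) ^ (L / 2) ≠ ⊤ :=
          ENNReal.mul_ne_top (ENNReal.pow_ne_top hcfin)
            (ENNReal.pow_ne_top (ENNReal.natCast_ne_top n))
        have h9 := ENNReal.toReal_mono hfin2 hmul
        rw [ENNReal.toReal_mul, ENNReal.toReal_mul, ENNReal.toReal_pow, ENNReal.toReal_pow,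
          ← ENNReal.toReal_rpow] at h9
        simp only [ENNReal.toReal_natCast] at h9
        rw [← hδ₀_def, ← hc_def] at h9
        exact h9
      have hbudget : h * (h * (n:ℝ) ^ α) ^ (p / (d:ℝ)) ≤ c ^ L * ((n / q : ℕ) : ℝ) ^ (L / 2) := by
        have hc0 : (0:ℝ) < c := lt_of_lt_of_le one_pos hc1R
        have step : h * (h * (n:ℝ) ^ α) ^ (p / (d:ℝ)) * ((2 * q : ℕ) : ℝ) ^ L
            ≤ c ^ L * ((2 * q : ℕ) : ℝ) ^ L * ((n / q : ℕ) : ℝ) ^ (L / 2) := by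
          calc h * (h * (n:ℝ) ^ α) ^ (p / (d:ℝ)) * ((2 * q : ℕ) : ℝ) ^ L
              = C * (n:ℝ) ^ (α * p / (d:ℝ)) := by
                rw [hΛid, hC_def]; ring
            _ ≤ δ₀ * (n:ℝ) ^ γ := hCbound
            _ ≤ c ^ L * (n:ℝ) ^ (L / 2) := hreal
            _ ≤ c ^ L * (((2 * q : ℕ) : ℝ) ^ L * (m:ℝ) ^ (L / 2)) :=
                mul_le_mul_of_nonneg_left hmpow (by positivity)
            _ = c ^ L * ((2 * q : ℕ) : ℝ) ^ L * ((n / q : ℕ) : ℝ) ^ (L / 2) := by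
                rw [hm_def]; ring
        have hpos : (0:ℝ) < ((2 * q : ℕ) : ℝ) ^ L := by positivity
        have := (mul_le_mul_iff_left₀ hpos).mp (by
          calc h * (h * (n:ℝ) ^ α) ^ (p / (d:ℝ)) * ((2 * q : ℕ) : ℝ) ^ L
              ≤ c ^ L * ((2 * q : ℕ) : ℝ) ^ L * ((n / q : ℕ) : ℝ) ^ (L / 2) := step
            _ = c ^ L * ((n / q : ℕ) : ℝ) ^ (L / 2) * ((2 * q : ℕ) : ℝ) ^ L := by ring)
        exact this
      exact spike_construction d hd ℓf cf hℓ2 p α hp hα L n k hL2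
        (fun n' hn' => hLn n' (le_trans hn₀n hn')) (by omega) c hc1R hcb hbudget
  -- assemble the sequence
  refine ⟨fun k => (key k).choose, fun k => (key k).choose_spec.1,
    fun k => (key k).choose_spec.2.1, ?_⟩
  apply ENNReal.tendsto_nhds_top
  intro M
  filter_upwards [Filter.eventually_gt_atTop M] with k hk
  exact lt_of_lt_of_le (by exact_mod_cast hk) (key k).choose_spec.2.2
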